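/- Let β(t) be the trajectory of the reparametrized gradient flow with initialization w_+(0) = w_−(0) = ω_0 where all entries of ω_0 are nonzero. Then for all t ≥ 0, β(t) = ω_0^{⊙2} ⊙ sinh(Σ_{i=1}^n Σ_{l≠opt(i)} φ_{il}(t) B_{il}) (sinh applied entrywise), where φ_{il}(t) := −(2/n) ∫_0^t exp(−γ_i^⊤ S(g_i(β(τ)))) (Σ(g_i(β(τ))) γ_i)_l dτ. -/

import Mathlib

open Real Filter Finset

noncomputable section

namespace AttnGF

/-- Softmax of a vector in `ℝ^L`. -/
def S {L : ℕ} (u : Fin L → ℝ) (l : Fin L) : ℝ := Real.exp (u l) / ∑ j, Real.exp (u j)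

/-- Euclidean norm of a vector. -/
def l2 {d : ℕ} (x : Fin d → ℝ) : ℝ := Real.sqrt (∑ j, x j ^ 2)

/-- ℓ1 norm of a vector. -/
def l1 {d : ℕ} (x : Fin d → ℝ) : ℝ := ∑ j, |x j|

variable {n L d de : ℕ}

/-- Token scores γ_{il} = y_i v^⊤ x_{il}. -/
def gam (X : Fin n → Fin L → Fin d → ℝ) (y : Fin n → ℝ) (v : Fin d → ℝ)
    (i : Fin n) (l : Fin L) : ℝ := y i * ∑ j, v j * X i l j

/-- g_i(β) = X_i (β ⊙ z_i) for the diagonal attention model. -/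
def gD (X : Fin n → Fin L → Fin d → ℝ) (z : Fin n → Fin d → ℝ) (i : Fin n)
    (β : Fin d → ℝ) (l : Fin L) : ℝ := ∑ j, X i l j * (β j * z i j)

/-- Empirical exponential loss for the diagonal attention model. -/
def lossD (X : Fin n → Fin L → Fin d → ℝ) (z : Fin n → Fin d → ℝ)
    (y : Fin n → ℝ) (v : Fin d → ℝ) (β : Fin d → ℝ) : ℝ :=
  (1 / (n : ℝ)) * ∑ i, Real.exp (-(∑ l, gam X y v i l * S (gD X z i β) l))

/-- Constraint vectors B_{il} = z_i ⊙ (x_{i,opt(i)} − x_{il}). -/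
def Bv (X : Fin n → Fin L → Fin d → ℝ) (z : Fin n → Fin d → ℝ)
    (opt : Fin n → Fin L) (i : Fin n) (l : Fin L) (j : Fin d) : ℝ :=
  z i j * (X i (opt i) j - X i l j)

/-- (Σ(u) γ)_l where Σ(u) = Diag(S(u)) − S(u) S(u)^⊤. -/
def SigMul {L : ℕ} (u γv : Fin L → ℝ) (l : Fin L) : ℝ :=
  S u l * γv l - S u l * ∑ j, S u j * γv j

/-- j-th component of the gradient (partial derivative) of f at x. -/
def pD {d : ℕ} (f : (Fin d → ℝ) → ℝ) (x : Fin d → ℝ) (j : Fin d) : ℝ :=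
  fderiv ℝ f x (Pi.single j 1)

/-- Assumption A1. -/
def A1 (X : Fin n → Fin L → Fin d → ℝ) (y : Fin n → ℝ) (v : Fin d → ℝ)
    (opt : Fin n → Fin L) (nopt : Fin n → ℝ) : Prop :=
  ∀ i : Fin n, ∀ l : Fin L, l ≠ opt i →
    gam X y v i l < gam X y v i (opt i) ∧ gam X y v i l = nopt i

/-- Feasibility for the ℓ1-SVM. -/
def Feas (X : Fin n → Fin L → Fin d → ℝ) (z : Fin n → Fin d → ℝ)
    (opt : Fin n → Fin L) (βf : Fin d → ℝ) : Prop :=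
  ∀ i : Fin n, ∀ l : Fin L, l ≠ opt i → 1 ≤ ∑ j, βf j * Bv X z opt i l j

/-- Reparametrized gradient flow on (w₊, w₋). -/
def Flow (X : Fin n → Fin L → Fin d → ℝ) (z : Fin n → Fin d → ℝ)
    (y : Fin n → ℝ) (v : Fin d → ℝ) (wp wm : ℝ → Fin d → ℝ) : Prop :=
  ∀ t : ℝ, 0 ≤ t → ∀ j : Fin d,
    HasDerivAt (fun s => wp s j)
      (-(pD (fun u => lossD X z y v (fun k => (u k ^ 2 - wm t k ^ 2) / 2)) (wp t) j)) t ∧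
    HasDerivAt (fun s => wm s j)
      (-(pD (fun u => lossD X z y v (fun k => (wp t k ^ 2 - u k ^ 2) / 2)) (wm t) j)) t

/-- β(t) = (w₊(t)^{⊙2} − w₋(t)^{⊙2})/2. -/
def bCurve (wp wm : ℝ → Fin d → ℝ) (t : ℝ) (j : Fin d) : ℝ :=
  (wp t j ^ 2 - wm t j ^ 2) / 2

/-- Assumption A2 (initial loss bound). -/
def A2 (X : Fin n → Fin L → Fin d → ℝ) (z : Fin n → Fin d → ℝ)
    (y : Fin n → ℝ) (v : Fin d → ℝ) (opt : Fin n → Fin L) (nopt : Fin n → ℝ)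
    (β0 : Fin d → ℝ) : Prop :=
  ∀ jj : Fin n, lossD X z y v β0 ≤
    (Real.exp (-(nopt jj)) +
      ∑ i ∈ Finset.univ.erase jj, Real.exp (-(gam X y v i (opt i)))) / (n : ℝ)

/-- Margin μ(β) = min_{i, l ≠ opt(i)} β^⊤ B_{il}. -/
def margin (X : Fin n → Fin L → Fin d → ℝ) (z : Fin n → Fin d → ℝ)
    (opt : Fin n → Fin L) (β : Fin d → ℝ) : ℝ :=
  sInf {m : ℝ | ∃ i : Fin n, ∃ l : Fin L, l ≠ opt i ∧ m = ∑ j, β j * Bv X z opt i l j}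

/-- φ_{il}(t). -/
def phi (X : Fin n → Fin L → Fin d → ℝ) (z : Fin n → Fin d → ℝ)
    (y : Fin n → ℝ) (v : Fin d → ℝ) (β : ℝ → Fin d → ℝ) (i : Fin n) (l : Fin L)
    (t : ℝ) : ℝ :=
  -(2 / (n : ℝ)) * ∫ τ in (0:ℝ)..t,
    Real.exp (-(∑ l', gam X y v i l' * S (gD X z i (β τ)) l')) *
      SigMul (gD X z i (β τ)) (gam X y v i) l

/-- Dual variables λ_{il}(t) = φ_{il}(t) / ln μ(β(t)). -/
def lam (X : Fin n → Fin L → Fin d → ℝ) (z : Fin n → Fin d → ℝ)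
    (y : Fin n → ℝ) (v : Fin d → ℝ) (opt : Fin n → Fin L) (β : ℝ → Fin d → ℝ)
    (i : Fin n) (l : Fin L) (t : ℝ) : ℝ :=
  (1 / Real.log (margin X z opt (β t))) * phi X z y v β i l t

/-- g_i(K,Q) = X_i K Q^⊤ z_i for the full attention model. -/
def gM (X : Fin n → Fin L → Fin d → ℝ) (z : Fin n → Fin d → ℝ) (i : Fin n)
    (K Q : Fin d → Fin de → ℝ) (l : Fin L) : ℝ :=
  ∑ a, ∑ b, ∑ c, X i l a * K a b * Q c b * z i c

/-- Empirical exponential loss for the full attention model. -/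
def lossM (X : Fin n → Fin L → Fin d → ℝ) (z : Fin n → Fin d → ℝ)
    (y : Fin n → ℝ) (v : Fin d → ℝ) (K Q : Fin d → Fin de → ℝ) : ℝ :=
  (1 / (n : ℝ)) * ∑ i, Real.exp (-(∑ l, gam X y v i l * S (gM X z i K Q) l))

/-- Partial derivative of f with respect to the (a,b) entry of a matrix. -/
def pDM {d de : ℕ} (f : (Fin d → Fin de → ℝ) → ℝ) (M : Fin d → Fin de → ℝ)
    (a : Fin d) (b : Fin de) : ℝ :=
  fderiv ℝ f M (Pi.single a (Pi.single b 1))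

/-- Gradient flow on the key and query matrices. -/
def MFlow (X : Fin n → Fin L → Fin d → ℝ) (z : Fin n → Fin d → ℝ)
    (y : Fin n → ℝ) (v : Fin d → ℝ) (K Q : ℝ → Fin d → Fin de → ℝ) : Prop :=
  ∀ t : ℝ, 0 ≤ t → ∀ (a : Fin d) (b : Fin de),
    HasDerivAt (fun s => K s a b) (-(pDM (fun M => lossM X z y v M (Q t)) (K t) a b)) t ∧
    HasDerivAt (fun s => Q s a b) (-(pDM (fun M => lossM X z y v (K t) M) (Q t) a b)) t

/-- A rectangular matrix is diagonal: zero off the main diagonal. -/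
def RectDiag {d de : ℕ} (M : Fin d → Fin de → ℝ) : Prop :=
  ∀ (a : Fin d) (b : Fin de), (a : ℕ) ≠ (b : ℕ) → M a b = 0

/-- Orthogonality: U^⊤ U = 1. -/
def Orth {d : ℕ} (U : Fin d → Fin d → ℝ) : Prop :=
  ∀ j j' : Fin d, ∑ a, U a j * U a j' = (if j = j' then (1:ℝ) else 0)

/-- Assumption B1, with the pairing of non-optimal tokens given by the involution σ. -/
def B1 (X : Fin n → Fin L → Fin d → ℝ) (z : Fin n → Fin d → ℝ)
    (opt : Fin n → Fin L) (σ : Fin n → Fin L → Fin L) : Prop :=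
  (∀ i j : Fin n, i ≠ j →
    (∑ a, X i (opt i) a * X j (opt j) a = 0) ∧ (∑ a, z i a * z j a = 0)) ∧
  (∀ i, |∑ a, X i (opt i) a * z i a| = l2 (X i (opt i)) * l2 (z i)) ∧
  (∀ i, ∀ l, l ≠ opt i → σ i l ≠ opt i ∧ σ i l ≠ l ∧ σ i (σ i l) = l ∧
    ∃ c : ℝ, -1 ≤ c ∧ c < 1 ∧
      (∑ a, X i (opt i) a * (X i l a - X i (σ i l) a)) = 0 ∧
      (∀ a, X i l a + X i (σ i l) a = 2 * c * X i (opt i) a))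

/-- Rotated constraint vectors B̃_{il}. -/
def Btil (X : Fin n → Fin L → Fin d → ℝ) (z : Fin n → Fin d → ℝ)
    (opt : Fin n → Fin L) (pim : Fin n → Fin d) (i : Fin n) (l : Fin L) (j : Fin d) : ℝ :=
  Real.sign (∑ a, X i (opt i) a * z i a) * (∑ a, (X i (opt i) a - X i l a) * z i a) *
    (if j = pim i then 1 else 0)

/-- Margin with respect to the rotated constraints. -/
def marginB (X : Fin n → Fin L → Fin d → ℝ) (z : Fin n → Fin d → ℝ)
    (opt : Fin n → Fin L) (pim : Fin n → Fin d) (β : Fin d → ℝ) : ℝ :=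
  sInf {m : ℝ | ∃ i : Fin n, ∃ l : Fin L, l ≠ opt i ∧ m = ∑ j, β j * Btil X z opt pim i l j}

/-- Margin for a combined attention weight matrix. -/
def marginM (X : Fin n → Fin L → Fin d → ℝ) (z : Fin n → Fin d → ℝ)
    (opt : Fin n → Fin L) (W : Fin d → Fin d → ℝ) : ℝ :=
  sInf {m : ℝ | ∃ i : Fin n, ∃ l : Fin L, l ≠ opt i ∧
    m = ∑ a, ∑ c, (X i (opt i) a - X i l a) * W a c * z i c}

/-- Nuclear norm ‖W‖_* = trace((W^⊤W)^{1/2}). -/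
def nuclear {d : ℕ} (W : Matrix (Fin d) (Fin d) ℝ) : ℝ :=
  (let hA := Matrix.posSemidef_conjTranspose_mul_self W
   (hA.1.eigenvectorUnitary.1 *
      Matrix.diagonal ((RCLike.ofReal : ℝ → ℝ) ∘ (Real.sqrt ·) ∘ hA.1.eigenvalues) *
      (star hA.1.eigenvectorUnitary : Matrix (Fin d) (Fin d) ℝ))).trace

end AttnGF

namespace AttnGF


section Aux

variable {n L d : ℕ} {X : Fin n → Fin L → Fin d → ℝ} {z : Fin n → Fin d → ℝ}
  {y : Fin n → ℝ} {v : Fin d → ℝ}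

lemma Dpos (hL : 0 < L) (u : Fin L → ℝ) : 0 < ∑ l, Real.exp (u l) :=
  Finset.sum_pos (fun _ _ => Real.exp_pos _) ⟨⟨0, hL⟩, Finset.mem_univ _⟩

lemma sum_S (hL : 0 < L) (u : Fin L → ℝ) : ∑ l, S u l = 1 := by
  simp only [S]
  rw [← Finset.sum_div, div_self (ne_of_gt (Dpos hL u))]

lemma sum_SigMul (hL : 0 < L) (u γv : Fin L → ℝ) : ∑ l, SigMul u γv l = 0 := by
  simp only [SigMul]
  rw [Finset.sum_sub_distrib, ← Finset.sum_mul, sum_S hL, one_mul, sub_self]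

lemma sig_identity (hL : 0 < L) (u γv tv : Fin L → ℝ) :
    ∑ l, SigMul u γv l * tv l =
      ((∑ l, Real.exp (u l)) * (∑ l, γv l * Real.exp (u l) * tv l) -
        (∑ l, γv l * Real.exp (u l)) * (∑ l, Real.exp (u l) * tv l)) /
        (∑ l, Real.exp (u l)) ^ 2 := by
  have hD : 0 < ∑ j, Real.exp (u j) := Dpos hL u
  have hS : ∀ m, S u m = Real.exp (u m) / ∑ j, Real.exp (u j) := fun m => rfl
  have hT : ∑ m, S u m * γv m = (∑ m, γv m * Real.exp (u m)) / ∑ j, Real.exp (u j) := by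
    rw [Finset.sum_div]
    exact Finset.sum_congr rfl fun m _ => by rw [hS]; ring
  calc ∑ l, SigMul u γv l * tv l
      = ∑ l, ((γv l * Real.exp (u l) * tv l) / (∑ j, Real.exp (u j)) -
          (Real.exp (u l) * tv l) * (∑ m, γv m * Real.exp (u m)) / (∑ j, Real.exp (u j)) ^ 2) := by
        refine Finset.sum_congr rfl fun l _ => ?_
        rw [SigMul, hS, hT]
        field_simp
    _ = (∑ l, γv l * Real.exp (u l) * tv l) / (∑ j, Real.exp (u j)) -
          ((∑ l, Real.exp (u l) * tv l) * (∑ m, γv m * Real.exp (u m))) / (∑ j, Real.exp (u j)) ^ 2 := by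
        rw [Finset.sum_sub_distrib, ← Finset.sum_div, ← Finset.sum_div, ← Finset.sum_mul]
    _ = _ := by field_simp

def Ni (X : Fin n → Fin L → Fin d → ℝ) (z : Fin n → Fin d → ℝ) (y : Fin n → ℝ)
    (v : Fin d → ℝ) (i : Fin n) (β : Fin d → ℝ) : ℝ :=
  ∑ l, gam X y v i l * Real.exp (gD X z i β l)

def Di (X : Fin n → Fin L → Fin d → ℝ) (z : Fin n → Fin d → ℝ) (i : Fin n)
    (β : Fin d → ℝ) : ℝ := ∑ l, Real.exp (gD X z i β l)

def Lg (X : Fin n → Fin L → Fin d → ℝ) (z : Fin n → Fin d → ℝ) (i : Fin n) (l : Fin L) :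
    (Fin d → ℝ) →L[ℝ] ℝ := ∑ j, (X i l j * z i j) • ContinuousLinearMap.proj j

def LNi (X : Fin n → Fin L → Fin d → ℝ) (z : Fin n → Fin d → ℝ) (y : Fin n → ℝ)
    (v : Fin d → ℝ) (i : Fin n) (β : Fin d → ℝ) : (Fin d → ℝ) →L[ℝ] ℝ :=
  ∑ l, (gam X y v i l * Real.exp (gD X z i β l)) • Lg X z i l

def LDi (X : Fin n → Fin L → Fin d → ℝ) (z : Fin n → Fin d → ℝ) (i : Fin n)
    (β : Fin d → ℝ) : (Fin d → ℝ) →L[ℝ] ℝ :=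
  ∑ l, Real.exp (gD X z i β l) • Lg X z i l

def LtotD (X : Fin n → Fin L → Fin d → ℝ) (z : Fin n → Fin d → ℝ) (y : Fin n → ℝ)
    (v : Fin d → ℝ) (β : Fin d → ℝ) : (Fin d → ℝ) →L[ℝ] ℝ :=
  (1/(n:ℝ)) • ∑ i, Real.exp (-(Ni X z y v i β * (Di X z i β)⁻¹)) •
    (-(Ni X z y v i β • ((-((Di X z i β)^2)⁻¹) • LDi X z i β) +
       (Di X z i β)⁻¹ • LNi X z y v i β))

lemma inner_eq (i : Fin n) (β : Fin d → ℝ) :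
    ∑ l, gam X y v i l * S (gD X z i β) l = Ni X z y v i β / Di X z i β := by
  unfold Ni Di S
  rw [Finset.sum_div]
  exact Finset.sum_congr rfl fun l _ => by ring

lemma hasFDeriv_gD (i : Fin n) (l : Fin L) (β : Fin d → ℝ) :
    HasFDerivAt (fun β => gD X z i β l) (Lg X z i l) β := by
  unfold gD Lg
  refine HasFDerivAt.fun_sum fun j _ => ?_
  have h := ((hasFDerivAt_apply (𝕜 := ℝ) j β).mul_const (z i j)).const_mul (X i l j)
  rwa [smul_smul] at h

lemma loss_hasFDerivAt (hL : Fin n → 0 < L) (β : Fin d → ℝ) :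
    HasFDerivAt (lossD X z y v) (LtotD X z y v β) β := by
  have hfun : lossD X z y v = fun β => (1/(n:ℝ)) *
      ∑ i, Real.exp (-(Ni X z y v i β * (Di X z i β)⁻¹)) := by
    funext β
    unfold lossD
    congr 1
    refine Finset.sum_congr rfl fun i _ => ?_
    rw [inner_eq, div_eq_mul_inv]
  rw [hfun]
  unfold LtotD
  refine HasFDerivAt.const_mul ?_ _
  refine HasFDerivAt.fun_sum fun i _ => ?_
  have hD : HasFDerivAt (fun β => Di X z i β) (LDi X z i β) β := by
    unfold Di LDi
    exact HasFDerivAt.fun_sum fun l _ => (hasFDeriv_gD i l β).exp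
  have hN : HasFDerivAt (fun β => Ni X z y v i β) (LNi X z y v i β) β := by
    unfold Ni LNi
    refine HasFDerivAt.fun_sum fun l _ => ?_
    have h := ((hasFDeriv_gD (X := X) (z := z) i l β).exp).const_mul (gam X y v i l)
    rwa [smul_smul] at h
  have hne : Di X z i β ≠ 0 := (Dpos (hL i) _).ne'
  have hInv : HasFDerivAt (fun β => (Di X z i β)⁻¹)
      ((-((Di X z i β)^2)⁻¹) • LDi X z i β) β :=
    (hasDerivAt_inv hne).comp_hasFDerivAt β hD
  exact ((hN.mul hInv).neg).exp

def aEnt (X : Fin n → Fin L → Fin d → ℝ) (z : Fin n → Fin d → ℝ) (y : Fin n → ℝ)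
    (v : Fin d → ℝ) (β : Fin d → ℝ) (j : Fin d) : ℝ :=
  -(1/(n:ℝ)) * ∑ i, Real.exp (-(∑ l, gam X y v i l * S (gD X z i β) l)) *
      ∑ l, SigMul (gD X z i β) (gam X y v i) l * (X i l j * z i j)

lemma Lg_apply (i : Fin n) (l : Fin L) (j : Fin d) (s : ℝ) :
    Lg X z i l (Pi.single j s) = X i l j * z i j * s := by
  unfold Lg
  simp [ContinuousLinearMap.sum_apply, Pi.single_apply, mul_ite, Finset.sum_ite_eq']

lemma LtotD_apply (hL : Fin n → 0 < L) (β : Fin d → ℝ) (j : Fin d) (s : ℝ) :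
    LtotD X z y v β (Pi.single j s) = s * aEnt X z y v β j := by
  have hE : ∀ i : Fin n, ∑ l, gam X y v i l * S (gD X z i β) l
      = Ni X z y v i β * (Di X z i β)⁻¹ := fun i => by
    rw [inner_eq, div_eq_mul_inv]
  unfold LtotD aEnt
  simp only [ContinuousLinearMap.smul_apply, ContinuousLinearMap.sum_apply,
    ContinuousLinearMap.neg_apply, ContinuousLinearMap.add_apply, LNi, LDi, Lg_apply,
    smul_eq_mul, hE]
  rw [Finset.mul_sum]
  have hi : ∀ i : Fin n, 1/(n:ℝ) * (Real.exp (-(Ni X z y v i β * (Di X z i β)⁻¹)) *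
      -(Ni X z y v i β * (-(Di X z i β ^ 2)⁻¹ *
          ∑ x, Real.exp (gD X z i β x) * (X i x j * z i j * s)) +
        (Di X z i β)⁻¹ * ∑ x, gam X y v i x * Real.exp (gD X z i β x) * (X i x j * z i j * s)))
      = s * (-(1/(n:ℝ)) * (Real.exp (-(Ni X z y v i β * (Di X z i β)⁻¹)) *
        ∑ l, SigMul (gD X z i β) (gam X y v i) l * (X i l j * z i j))) := ?_
  case _ =>
    rw [Finset.sum_congr rfl fun i _ => hi i, ← Finset.mul_sum, ← Finset.mul_sum]
  intro i
  have hD : (0:ℝ) < Di X z i β := Dpos (hL i) _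
  rw [sig_identity (hL i) (gD X z i β) (gam X y v i) (fun l => X i l j * z i j)]
  have h1 : ∑ x : Fin L, Real.exp (gD X z i β x) * (X i x j * z i j * s)
      = (∑ x : Fin L, Real.exp (gD X z i β x) * (X i x j * z i j)) * s := by
    rw [Finset.sum_mul]; exact Finset.sum_congr rfl fun _ _ => by ring
  have h2 : ∑ x : Fin L, gam X y v i x * Real.exp (gD X z i β x) * (X i x j * z i j * s)
      = (∑ x : Fin L, gam X y v i x * Real.exp (gD X z i β x) * (X i x j * z i j)) * s := by
    rw [Finset.sum_mul]; exact Finset.sum_congr rfl fun _ _ => by ring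
  rw [h1, h2]
  have hNi : Ni X z y v i β = ∑ l, gam X y v i l * Real.exp (gD X z i β l) := rfl
  have hDi : Di X z i β = ∑ l, Real.exp (gD X z i β l) := rfl
  rw [hNi, hDi]
  have hDne : (∑ l, Real.exp (gD X z i β l)) ≠ 0 := by rw [← hDi]; exact hD.ne'
  set D := ∑ l, Real.exp (gD X z i β l) with hDdef
  set N := ∑ l, gam X y v i l * Real.exp (gD X z i β l) with hNdef
  set A := ∑ x, gam X y v i x * Real.exp (gD X z i β x) * (X i x j * z i j) with hAdef
  set B := ∑ x, Real.exp (gD X z i β x) * (X i x j * z i j) with hBdef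
  have hP : D * D⁻¹ = 1 := mul_inv_cancel₀ hDne
  rw [div_eq_mul_inv, pow_two, mul_inv]
  linear_combination (1/(n:ℝ) * Real.exp (-(N * D⁻¹)) * s * A * D⁻¹) * hP

lemma hasFDeriv_sq_coord (c : Fin d → ℝ) (w : Fin d → ℝ) (k : Fin d) :
    HasFDerivAt (fun u : Fin d → ℝ => (u k ^ 2 - c k ^ 2) / 2)
      ((w k • ContinuousLinearMap.proj k : (Fin d → ℝ) →L[ℝ] ℝ)) w := by
  have hb := hasFDerivAt_apply (𝕜 := ℝ) k w
  have h1 := ((hb.mul hb).sub_const (c k ^ 2)).const_mul ((1:ℝ)/2)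
  have hfun : (fun u : Fin d → ℝ => (u k ^ 2 - c k ^ 2) / 2)
      = fun u => (1:ℝ)/2 * (u k * u k - c k ^ 2) := by funext u; ring
  rw [hfun]
  refine h1.congr_fderiv ?_
  ext u
  simp only [ContinuousLinearMap.smul_apply, ContinuousLinearMap.add_apply,
    ContinuousLinearMap.proj_apply, smul_eq_mul]
  ring

def PhiP (w : Fin d → ℝ) : (Fin d → ℝ) →L[ℝ] (Fin d → ℝ) :=
  ContinuousLinearMap.pi fun k => w k • ContinuousLinearMap.proj k

lemma hasFDeriv_phiP (c : Fin d → ℝ) (w : Fin d → ℝ) :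
    HasFDerivAt (fun u : Fin d → ℝ => (fun k => (u k ^ 2 - c k ^ 2) / 2)) (PhiP w) w := by
  apply hasFDerivAt_pi''
  intro k
  rw [PhiP, ContinuousLinearMap.proj_pi]
  exact hasFDeriv_sq_coord c w k

lemma hasFDeriv_phiM (c : Fin d → ℝ) (w : Fin d → ℝ) :
    HasFDerivAt (fun u : Fin d → ℝ => (fun k => (c k ^ 2 - u k ^ 2) / 2)) (PhiP (-w)) w := by
  apply hasFDerivAt_pi''
  intro k
  rw [PhiP, ContinuousLinearMap.proj_pi]
  have h1 := (hasFDeriv_sq_coord c w k).neg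
  convert h1 using 1
  · funext u; simp only [Pi.neg_apply]; ring
  · ext u; simp

lemma pi_single (w : Fin d → ℝ) (j : Fin d) :
    PhiP w (Pi.single j 1) = Pi.single j (w j) := by
  funext k
  rw [PhiP]
  by_cases hk : k = j
  · subst hk; simp
  · simp [Pi.single_apply, hk]

lemma pD_plus (hL : Fin n → 0 < L) (c w : Fin d → ℝ) (j : Fin d) :
    pD (fun u => lossD X z y v (fun k => (u k ^ 2 - c k ^ 2) / 2)) w j
      = w j * aEnt X z y v (fun k => (w k ^ 2 - c k ^ 2) / 2) j := by
  have hΦ := hasFDeriv_phiP c w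
  have hg : HasFDerivAt (lossD X z y v)
      (LtotD X z y v (fun k => (w k ^ 2 - c k ^ 2) / 2))
      ((fun u : Fin d → ℝ => (fun k => (u k ^ 2 - c k ^ 2) / 2)) w) :=
    loss_hasFDerivAt hL _
  have hcomp := hg.comp w hΦ
  unfold pD
  show (fderiv ℝ (lossD X z y v ∘ fun u : Fin d → ℝ => fun k => (u k ^ 2 - c k ^ 2) / 2) w)
    (Pi.single j 1) = _
  rw [hcomp.fderiv, ContinuousLinearMap.comp_apply, pi_single,
    LtotD_apply hL _ j (w j)]

lemma pD_minus (hL : Fin n → 0 < L) (c w : Fin d → ℝ) (j : Fin d) :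
    pD (fun u => lossD X z y v (fun k => (c k ^ 2 - u k ^ 2) / 2)) w j
      = -(w j * aEnt X z y v (fun k => (c k ^ 2 - w k ^ 2) / 2) j) := by
  have hΦ := hasFDeriv_phiM c w
  have hg : HasFDerivAt (lossD X z y v)
      (LtotD X z y v (fun k => (c k ^ 2 - w k ^ 2) / 2))
      ((fun u : Fin d → ℝ => (fun k => (c k ^ 2 - u k ^ 2) / 2)) w) :=
    loss_hasFDerivAt hL _
  have hcomp := hg.comp w hΦ
  unfold pD
  show (fderiv ℝ (lossD X z y v ∘ fun u : Fin d → ℝ => fun k => (c k ^ 2 - u k ^ 2) / 2) w)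
    (Pi.single j 1) = _
  rw [hcomp.fderiv, ContinuousLinearMap.comp_apply, pi_single,
    LtotD_apply hL _ j ((-w) j)]
  rw [Pi.neg_apply]
  ring

-- continuity lemmas

lemma cont_gD (i : Fin n) (l : Fin L) : Continuous fun β : Fin d → ℝ => gD X z i β l := by
  unfold gD
  exact continuous_finset_sum _ fun j _ =>
    continuous_const.mul ((continuous_apply j).mul continuous_const)

lemma cont_S (i : Fin n) (l : Fin L) : Continuous fun β : Fin d → ℝ => S (gD X z i β) l := by
  unfold S
  refine Continuous.div (Real.continuous_exp.comp (cont_gD i l))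
    (continuous_finset_sum _ fun m _ => Real.continuous_exp.comp (cont_gD i m)) fun β => ?_
  exact (Dpos (Fin.pos l) (gD X z i β)).ne'

lemma cont_eF (i : Fin n) :
    Continuous fun β : Fin d → ℝ =>
      Real.exp (-(∑ l, gam X y v i l * S (gD X z i β) l)) :=
  Real.continuous_exp.comp (Continuous.neg
    (continuous_finset_sum _ fun l _ => continuous_const.mul (cont_S i l)))

lemma cont_SigMul (i : Fin n) (l : Fin L) :
    Continuous fun β : Fin d → ℝ => SigMul (gD X z i β) (gam X y v i) l := by
  unfold SigMul
  exact ((cont_S i l).mul continuous_const).sub ((cont_S i l).mul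
    (continuous_finset_sum _ fun m _ => (cont_S i m).mul continuous_const))

lemma cont_aEnt (j : Fin d) : Continuous fun β : Fin d → ℝ => aEnt X z y v β j := by
  unfold aEnt
  exact continuous_const.mul (continuous_finset_sum _ fun i _ =>
    (cont_eF i).mul (continuous_finset_sum _ fun l _ =>
      (cont_SigMul i l).mul continuous_const))

-- erase identities

lemma erase_identity (hL : 0 < L) (u γv a : Fin L → ℝ) (o : Fin L) :
    ∑ l ∈ Finset.univ.erase o, SigMul u γv l * (a o - a l)
      = -∑ l, SigMul u γv l * a l := by
  have h0 : ∑ l, SigMul u γv l = 0 := sum_SigMul hL u γv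
  rw [← Finset.sum_erase_add Finset.univ _ (Finset.mem_univ o)] at h0
  rw [← Finset.sum_erase_add Finset.univ (fun l => SigMul u γv l * a l) (Finset.mem_univ o)]
  have ho : SigMul u γv o = -∑ l ∈ Finset.univ.erase o, SigMul u γv l := by linarith
  rw [ho]
  rw [show (∑ l ∈ Finset.univ.erase o, SigMul u γv l * (a o - a l))
      = (∑ l ∈ Finset.univ.erase o, (SigMul u γv l * a o - SigMul u γv l * a l))
      from Finset.sum_congr rfl fun l _ => by ring]
  rw [Finset.sum_sub_distrib, ← Finset.sum_mul]
  ring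

lemma erase_Bv (opt : Fin n → Fin L) (i : Fin n) (β : Fin d → ℝ) (j : Fin d) :
    ∑ l ∈ Finset.univ.erase (opt i),
        SigMul (gD X z i β) (gam X y v i) l * Bv X z opt i l j
      = -∑ l, SigMul (gD X z i β) (gam X y v i) l * (X i l j * z i j) := by
  have h : ∑ l ∈ Finset.univ.erase (opt i),
      SigMul (gD X z i β) (gam X y v i) l * (X i (opt i) j - X i l j)
      = -∑ l, SigMul (gD X z i β) (gam X y v i) l * (X i l j) :=
    erase_identity (Fin.pos (opt i)) (gD X z i β) (gam X y v i) (fun l => X i l j) (opt i)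
  calc ∑ l ∈ Finset.univ.erase (opt i),
        SigMul (gD X z i β) (gam X y v i) l * Bv X z opt i l j
      = ∑ l ∈ Finset.univ.erase (opt i),
          z i j * (SigMul (gD X z i β) (gam X y v i) l * (X i (opt i) j - X i l j)) :=
        Finset.sum_congr rfl fun l _ => by rw [Bv]; ring
    _ = z i j * ∑ l ∈ Finset.univ.erase (opt i),
          SigMul (gD X z i β) (gam X y v i) l * (X i (opt i) j - X i l j) := by
        rw [Finset.mul_sum]
    _ = z i j * -∑ l, SigMul (gD X z i β) (gam X y v i) l * (X i l j) := by rw [h]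
    _ = _ := by
        rw [mul_neg, Finset.mul_sum]
        exact congrArg Neg.neg (Finset.sum_congr rfl fun l _ => by ring)

def aaF (X : Fin n → Fin L → Fin d → ℝ) (z : Fin n → Fin d → ℝ) (y : Fin n → ℝ)
    (v : Fin d → ℝ) (wp wm : ℝ → Fin d → ℝ) (k : Fin d) (τ : ℝ) : ℝ :=
  aEnt X z y v (bCurve wp wm τ) k

def AF (X : Fin n → Fin L → Fin d → ℝ) (z : Fin n → Fin d → ℝ) (y : Fin n → ℝ)
    (v : Fin d → ℝ) (wp wm : ℝ → Fin d → ℝ) (k : Fin d) (s : ℝ) : ℝ :=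
  ∫ τ in (0:ℝ)..s, aaF X z y v wp wm k τ

end Aux

set_option maxHeartbeats 2000000

/-- closed form β(t) = ω₀^{⊙2} ⊙ sinh(Σ φ_{il}(t) B_{il}). -/
theorem statement6 {n L d : ℕ}
    (X : Fin n → Fin L → Fin d → ℝ) (z : Fin n → Fin d → ℝ)
    (y : Fin n → ℝ) (v : Fin d → ℝ)
    (opt : Fin n → Fin L)
    (hopt : ∀ i : Fin n, ∀ l : Fin L, l ≠ opt i → gam X y v i l < gam X y v i (opt i))
    (wp wm : ℝ → Fin d → ℝ) (hflow : Flow X z y v wp wm)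
    (ω0 : Fin d → ℝ) (hω : ∀ j, ω0 j ≠ 0)
    (hip : wp 0 = ω0) (him : wm 0 = ω0) :
    ∀ t : ℝ, 0 ≤ t → ∀ j : Fin d,
      bCurve wp wm t j = ω0 j ^ 2 *
        Real.sinh (∑ i : Fin n, ∑ l ∈ Finset.univ.erase (opt i),
          phi X z y v (bCurve wp wm) i l t * Bv X z opt i l j) := by
  intro t ht j
  have hL : Fin n → 0 < L := fun i => Fin.pos (opt i)
  have hwpc : ∀ k : Fin d, ∀ τ : ℝ, 0 ≤ τ → ContinuousAt (fun s => wp s k) τ :=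
    fun k τ hτ => (hflow τ hτ k).1.continuousAt
  have hwmc : ∀ k : Fin d, ∀ τ : ℝ, 0 ≤ τ → ContinuousAt (fun s => wm s k) τ :=
    fun k τ hτ => (hflow τ hτ k).2.continuousAt
  have hbCA : ∀ τ : ℝ, 0 ≤ τ → ContinuousAt (bCurve wp wm) τ := by
    intro τ hτ
    rw [continuousAt_pi]
    intro k
    have h : ContinuousAt (fun s => (wp s k ^ 2 - wm s k ^ 2) / 2) τ :=
      (((hwpc k τ hτ).pow 2).sub ((hwmc k τ hτ).pow 2)).div_const 2
    exact h
  have haaCA : ∀ k : Fin d, ∀ τ : ℝ, 0 ≤ τ → ContinuousAt (aaF X z y v wp wm k) τ :=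
    fun k τ hτ => (cont_aEnt k).continuousAt.comp (hbCA τ hτ)
  have haaInt : ∀ k : Fin d, ∀ b : ℝ, 0 ≤ b →
      IntervalIntegrable (aaF X z y v wp wm k) MeasureTheory.volume 0 b := by
    intro k b hb
    apply ContinuousOn.intervalIntegrable
    rw [Set.uIcc_of_le hb]
    exact fun τ hτ => (haaCA k τ hτ.1).continuousWithinAt
  have hA' : ∀ k : Fin d, ∀ τ : ℝ, τ ∈ Set.Ioo 0 t →
      HasDerivAt (AF X z y v wp wm k) (aaF X z y v wp wm k τ) τ := by
    intro k τ hτ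
    have hmeas : StronglyMeasurableAtFilter (aaF X z y v wp wm k) (nhds τ)
        MeasureTheory.volume := by
      refine ContinuousOn.stronglyMeasurableAtFilter (s := Set.Ioi (0:ℝ)) isOpen_Ioi
        (fun σ hσ => (haaCA k σ (le_of_lt hσ)).continuousWithinAt) τ hτ.1
    exact intervalIntegral.integral_hasDerivAt_right (haaInt k τ hτ.1.le) hmeas
      (haaCA k τ hτ.1.le)
  have hAcont : ∀ k : Fin d, ContinuousOn (AF X z y v wp wm k) (Set.Icc 0 t) := by
    intro k
    have h := intervalIntegral.continuousOn_primitive_interval' (haaInt k t ht)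
      Set.left_mem_uIcc
    rwa [Set.uIcc_of_le ht] at h
  have hA0 : ∀ k : Fin d, AF X z y v wp wm k 0 = 0 := fun k => intervalIntegral.integral_same
  -- wp constancy
  have hwpt : wp t j * Real.exp (AF X z y v wp wm j t) = ω0 j := by
    have hderiv : ∀ τ ∈ Set.Ioo 0 t,
        HasDerivWithinAt (fun s => wp s j * Real.exp (AF X z y v wp wm j s))
          ((fun _ => (0:ℝ)) τ) (Set.Ioi τ) τ := by
      intro τ hτ
      have hw := (hflow τ hτ.1.le j).1
      rw [pD_plus hL (wm τ) (wp τ) j] at hw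
      have hprod := hw.mul ((hA' j τ hτ).exp)
      have hval : -(wp τ j * aEnt X z y v (fun k => (wp τ k ^ 2 - wm τ k ^ 2) / 2) j) *
          Real.exp (AF X z y v wp wm j τ) +
          wp τ j * (Real.exp (AF X z y v wp wm j τ) * aaF X z y v wp wm j τ) = 0 := by
        have hbe : aEnt X z y v (fun k => (wp τ k ^ 2 - wm τ k ^ 2) / 2) j
            = aaF X z y v wp wm j τ := rfl
        rw [hbe]; ring
      rw [hval] at hprod
      exact hprod.hasDerivWithinAt
    have hcont : ContinuousOn (fun s => wp s j * Real.exp (AF X z y v wp wm j s))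
        (Set.Icc 0 t) :=
      ContinuousOn.mul (fun τ hτ => (hwpc j τ hτ.1).continuousWithinAt)
        (Real.continuous_exp.comp_continuousOn (hAcont j))
    have h0 := intervalIntegral.integral_eq_sub_of_hasDeriv_right_of_le ht hcont hderiv
      intervalIntegrable_const
    have h1 : wp 0 j * Real.exp (AF X z y v wp wm j 0) = ω0 j := by
      rw [hA0 j, Real.exp_zero, hip, mul_one]
    simp only [intervalIntegral.integral_const, smul_zero, smul_eq_mul, mul_zero] at h0
    linarith [h0, h1]
  -- wm constancy
  have hwmt : wm t j * Real.exp (-AF X z y v wp wm j t) = ω0 j := by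
    have hderiv : ∀ τ ∈ Set.Ioo 0 t,
        HasDerivWithinAt (fun s => wm s j * Real.exp (-AF X z y v wp wm j s))
          ((fun _ => (0:ℝ)) τ) (Set.Ioi τ) τ := by
      intro τ hτ
      have hw := (hflow τ hτ.1.le j).2
      rw [pD_minus hL (wp τ) (wm τ) j] at hw
      have hprod := hw.mul (((hA' j τ hτ).neg).exp)
      have hval : - -(wm τ j * aEnt X z y v (fun k => (wp τ k ^ 2 - wm τ k ^ 2) / 2) j) *
          Real.exp (-AF X z y v wp wm j τ) +
          wm τ j * (Real.exp (-AF X z y v wp wm j τ) * -aaF X z y v wp wm j τ) = 0 := by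
        have hbe : aEnt X z y v (fun k => (wp τ k ^ 2 - wm τ k ^ 2) / 2) j
            = aaF X z y v wp wm j τ := rfl
        rw [hbe]; ring
      simp only [Pi.neg_apply] at hprod
      rw [hval] at hprod
      exact hprod.hasDerivWithinAt
    have hcont : ContinuousOn (fun s => wm s j * Real.exp (-AF X z y v wp wm j s))
        (Set.Icc 0 t) :=
      ContinuousOn.mul (fun τ hτ => (hwmc j τ hτ.1).continuousWithinAt)
        (Real.continuous_exp.comp_continuousOn (hAcont j).neg)
    have h0 := intervalIntegral.integral_eq_sub_of_hasDeriv_right_of_le ht hcont hderiv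
      intervalIntegrable_const
    have h1 : wm 0 j * Real.exp (-AF X z y v wp wm j 0) = ω0 j := by
      rw [hA0 j, neg_zero, Real.exp_zero, him, mul_one]
    simp only [intervalIntegral.integral_const, smul_zero, smul_eq_mul, mul_zero] at h0
    linarith [h0, h1]
  -- step 8: the sum of phi's equals -2 * A
  have hsum : (∑ i : Fin n, ∑ l ∈ Finset.univ.erase (opt i),
      phi X z y v (bCurve wp wm) i l t * Bv X z opt i l j) = -2 * AF X z y v wp wm j t := by
    have hIntIL : ∀ (i : Fin n) (l : Fin L), IntervalIntegrable
        (fun τ => -(2/(n:ℝ)) *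
          (Real.exp (-(∑ l', gam X y v i l' * S (gD X z i (bCurve wp wm τ)) l')) *
            SigMul (gD X z i (bCurve wp wm τ)) (gam X y v i) l * Bv X z opt i l j))
        MeasureTheory.volume 0 t := by
      intro i l
      apply ContinuousOn.intervalIntegrable
      rw [Set.uIcc_of_le ht]
      intro τ hτ
      have hc : Continuous (fun β : Fin d → ℝ => -(2/(n:ℝ)) *
          (Real.exp (-(∑ l', gam X y v i l' * S (gD X z i β) l')) *
            SigMul (gD X z i β) (gam X y v i) l * Bv X z opt i l j)) :=
        continuous_const.mul (((cont_eF i).mul (cont_SigMul i l)).mul continuous_const)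
      exact (hc.continuousAt.comp (hbCA τ hτ.1)).continuousWithinAt
    have phi_mul : ∀ (f : ℝ → ℝ) (b c : ℝ),
        (c * ∫ τ in (0:ℝ)..t, f τ) * b = ∫ τ in (0:ℝ)..t, c * (f τ * b) := by
      intro f b c
      rw [intervalIntegral.integral_const_mul, intervalIntegral.integral_mul_const]
      ring
    have hphiB : ∀ (i : Fin n) (l : Fin L),
        phi X z y v (bCurve wp wm) i l t * Bv X z opt i l j
          = ∫ τ in (0:ℝ)..t, -(2/(n:ℝ)) *
              (Real.exp (-(∑ l', gam X y v i l' * S (gD X z i (bCurve wp wm τ)) l')) *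
                SigMul (gD X z i (bCurve wp wm τ)) (gam X y v i) l * Bv X z opt i l j) := by
      intro i l
      simp only [phi]
      exact phi_mul _ _ _
    have hpt : ∀ τ : ℝ,
        (∑ i : Fin n, ∑ l ∈ Finset.univ.erase (opt i), -(2/(n:ℝ)) *
          (Real.exp (-(∑ l', gam X y v i l' * S (gD X z i (bCurve wp wm τ)) l')) *
            SigMul (gD X z i (bCurve wp wm τ)) (gam X y v i) l * Bv X z opt i l j))
          = -2 * aaF X z y v wp wm j τ := by
      intro τ
      simp only [aaF, aEnt]
      rw [show (-2 : ℝ) * (-(1/(n:ℝ)) *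
          ∑ i, Real.exp (-(∑ l, gam X y v i l * S (gD X z i (bCurve wp wm τ)) l)) *
            ∑ l, SigMul (gD X z i (bCurve wp wm τ)) (gam X y v i) l * (X i l j * z i j))
        = ∑ i, (-2 : ℝ) * -(1/(n:ℝ)) *
            (Real.exp (-(∑ l, gam X y v i l * S (gD X z i (bCurve wp wm τ)) l)) *
              ∑ l, SigMul (gD X z i (bCurve wp wm τ)) (gam X y v i) l * (X i l j * z i j))
        from by rw [← mul_assoc, Finset.mul_sum]]
      refine Finset.sum_congr rfl fun i _ => ?_
      have e5 : ∑ l ∈ Finset.univ.erase (opt i),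
          Real.exp (-(∑ l', gam X y v i l' * S (gD X z i (bCurve wp wm τ)) l')) *
            SigMul (gD X z i (bCurve wp wm τ)) (gam X y v i) l * Bv X z opt i l j
          = Real.exp (-(∑ l', gam X y v i l' * S (gD X z i (bCurve wp wm τ)) l')) *
            ∑ l ∈ Finset.univ.erase (opt i),
              SigMul (gD X z i (bCurve wp wm τ)) (gam X y v i) l * Bv X z opt i l j := by
        rw [Finset.mul_sum]
        exact Finset.sum_congr rfl fun l _ => by ring
      rw [← Finset.mul_sum, e5, erase_Bv opt i (bCurve wp wm τ) j]
      ring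
    calc (∑ i : Fin n, ∑ l ∈ Finset.univ.erase (opt i),
        phi X z y v (bCurve wp wm) i l t * Bv X z opt i l j)
        = ∑ i : Fin n, ∑ l ∈ Finset.univ.erase (opt i), ∫ τ in (0:ℝ)..t, -(2/(n:ℝ)) *
            (Real.exp (-(∑ l', gam X y v i l' * S (gD X z i (bCurve wp wm τ)) l')) *
              SigMul (gD X z i (bCurve wp wm τ)) (gam X y v i) l * Bv X z opt i l j) :=
          Finset.sum_congr rfl fun i _ => Finset.sum_congr rfl fun l _ => hphiB i l
      _ = ∑ i : Fin n, ∫ τ in (0:ℝ)..t, ∑ l ∈ Finset.univ.erase (opt i), -(2/(n:ℝ)) *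
            (Real.exp (-(∑ l', gam X y v i l' * S (gD X z i (bCurve wp wm τ)) l')) *
              SigMul (gD X z i (bCurve wp wm τ)) (gam X y v i) l * Bv X z opt i l j) :=
          Finset.sum_congr rfl fun i _ =>
            (intervalIntegral.integral_finset_sum fun l _ => hIntIL i l).symm
      _ = ∫ τ in (0:ℝ)..t, ∑ i : Fin n, ∑ l ∈ Finset.univ.erase (opt i), -(2/(n:ℝ)) *
            (Real.exp (-(∑ l', gam X y v i l' * S (gD X z i (bCurve wp wm τ)) l')) *
              SigMul (gD X z i (bCurve wp wm τ)) (gam X y v i) l * Bv X z opt i l j) :=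
          (intervalIntegral.integral_finset_sum fun i _ => by
            have h2 : (fun τ => ∑ l ∈ Finset.univ.erase (opt i), -(2/(n:ℝ)) *
                (Real.exp (-(∑ l', gam X y v i l' * S (gD X z i (bCurve wp wm τ)) l')) *
                  SigMul (gD X z i (bCurve wp wm τ)) (gam X y v i) l * Bv X z opt i l j))
                = ∑ l ∈ Finset.univ.erase (opt i), (fun τ => -(2/(n:ℝ)) *
                (Real.exp (-(∑ l', gam X y v i l' * S (gD X z i (bCurve wp wm τ)) l')) *
                  SigMul (gD X z i (bCurve wp wm τ)) (gam X y v i) l * Bv X z opt i l j)) := by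
              funext τ
              simp
            rw [h2]
            exact IntervalIntegrable.sum _ fun l _ => hIntIL i l).symm
      _ = ∫ τ in (0:ℝ)..t, -2 * aaF X z y v wp wm j τ :=
          intervalIntegral.integral_congr fun τ _ => hpt τ
      _ = -2 * AF X z y v wp wm j t := by
          simp only [AF]
          exact intervalIntegral.integral_const_mul _ _
  rw [hsum, Real.sinh_eq]
  set Aj := AF X z y v wp wm j t with hAj
  have h1 : wp t j ^ 2 = ω0 j ^ 2 * Real.exp (-(2 * Aj)) := by
    have hsq : wp t j ^ 2 * Real.exp Aj ^ 2 = ω0 j ^ 2 := by rw [← mul_pow, hwpt]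
    have hx : Real.exp Aj ^ 2 * Real.exp (-(2 * Aj)) = 1 := by
      rw [pow_two, ← Real.exp_add, ← Real.exp_add,
        show Aj + Aj + -(2 * Aj) = 0 from by ring, Real.exp_zero]
    calc wp t j ^ 2 = wp t j ^ 2 * (Real.exp Aj ^ 2 * Real.exp (-(2 * Aj))) := by
          rw [hx, mul_one]
      _ = wp t j ^ 2 * Real.exp Aj ^ 2 * Real.exp (-(2 * Aj)) := by ring
      _ = ω0 j ^ 2 * Real.exp (-(2 * Aj)) := by rw [hsq]
  have h2 : wm t j ^ 2 = ω0 j ^ 2 * Real.exp (2 * Aj) := by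
    have hsq : wm t j ^ 2 * Real.exp (-Aj) ^ 2 = ω0 j ^ 2 := by rw [← mul_pow, hwmt]
    have hx : Real.exp (-Aj) ^ 2 * Real.exp (2 * Aj) = 1 := by
      rw [pow_two, ← Real.exp_add, ← Real.exp_add,
        show -Aj + -Aj + 2 * Aj = 0 from by ring, Real.exp_zero]
    calc wm t j ^ 2 = wm t j ^ 2 * (Real.exp (-Aj) ^ 2 * Real.exp (2 * Aj)) := by
          rw [hx, mul_one]
      _ = wm t j ^ 2 * Real.exp (-Aj) ^ 2 * Real.exp (2 * Aj) := by ring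
      _ = ω0 j ^ 2 * Real.exp (2 * Aj) := by rw [hsq]
  have e3 : -(-2 * Aj) = 2 * Aj := by ring
  have e4 : (-2 : ℝ) * Aj = -(2 * Aj) := by ring
  rw [e3, e4]
  show (wp t j ^ 2 - wm t j ^ 2) / 2 = _
  rw [h1, h2]
  ring

end AttnGF
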